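/- Scalar-product separation of complete congruences in EReal^n: Let W ⊆ (EReal^n)^2 be a complete congruence and let s, t ∈ EReal^n be such that (s,t) ∉ W. Then there exists y ∈ EReal^n such that ⨆ i, (y_i + f_i) = ⨆ j, (y_j + g_j) for every (f,g) ∈ W, while ⨆ i, (y_i + s_i) ≠ ⨆ j, (y_j + t_j). -/

import Mathlib

open scoped Classical

noncomputable section

/-- Vectors of the semimodule `EReal^n` over the completed max-plus
semiring `EReal = ℝ ∪ {±∞}`. -/
abbrev EVec (n : ℕ) := Fin n → EReal

/-- `W ⊆ (EReal^n)² ≅ EReal^{2n}` is a complete subsemimodule (with the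
entrywise operations): it is stable under entrywise max, under the entrywise
addition of any scalar, and under arbitrary (entrywise) suprema. -/
def IsCompleteSubsemimoduleE {n : ℕ} (W : Set (EVec n × EVec n)) : Prop :=
  (∀ p ∈ W, ∀ q ∈ W, p ⊔ q ∈ W) ∧
  (∀ p ∈ W, ∀ lam : EReal,
    ((fun i => p.1 i + lam, fun i => p.2 i + lam) : EVec n × EVec n) ∈ W) ∧
  (∀ Q : Set (EVec n × EVec n), Q ⊆ W → sSup Q ∈ W)

/-- A complete pre-congruence: a complete subsemimodule of `(EReal^n)²`
containing the diagonal and transitive. -/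
def IsCompletePrecongruenceE {n : ℕ} (W : Set (EVec n × EVec n)) : Prop :=
  IsCompleteSubsemimoduleE W ∧ (∀ f : EVec n, (f, f) ∈ W) ∧
    ∀ f g h : EVec n, (f, g) ∈ W → (g, h) ∈ W → (f, h) ∈ W

/-- A complete polar cone: a complete pre-congruence such that `f ≤ g`
implies `(f,g) ∈ W`. -/
def IsCompletePolarConeE {n : ℕ} (W : Set (EVec n × EVec n)) : Prop :=
  IsCompletePrecongruenceE W ∧ ∀ f g : EVec n, f ≤ g → (f, g) ∈ W

/-- A complete congruence: a symmetric complete pre-congruence. -/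
def IsCompleteCongruenceE {n : ℕ} (W : Set (EVec n × EVec n)) : Prop :=
  IsCompletePrecongruenceE W ∧ ∀ f g : EVec n, (f, g) ∈ W → (g, f) ∈ W

/-- The entrywise supremum `ē(g) = sSup { f | (f,g) ∈ W }`. -/
def ebarE {n : ℕ} (W : Set (EVec n × EVec n)) (g : EVec n) : EVec n :=
  sSup { f : EVec n | (f, g) ∈ W }

/-- The residuation `u∖x = sSup { λ | ∀ i, u_i + λ ≤ x_i }` in `EReal`. -/
def eresE {n : ℕ} (u x : EVec n) : EReal :=
  sSup { lam : EReal | ∀ i, u i + lam ≤ x i }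

section SepAux

variable {n : ℕ} {W : Set (EVec n × EVec n)}

/-- `a + (-a) ≤ 0` in `EReal`. -/
lemma ereal_add_neg_le_zero (a : EReal) : -a + a ≤ 0 := by
  induction a using EReal.rec with
  | bot => simp
  | coe r => rw [← EReal.coe_neg, ← EReal.coe_add]; simp
  | top => simp

lemma ereal_neg_add_le {a b : EReal} {μ : ℝ} (h : -a + b ≤ (μ : EReal)) :
    b ≤ a + (μ : EReal) := by
  induction a using EReal.rec with
  | bot =>
    rw [EReal.neg_bot] at h
    rcases eq_or_ne b ⊥ with hb | hb
    · simp [hb]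
    · rw [EReal.top_add_of_ne_bot hb] at h
      exact absurd h (by simp)
  | coe r =>
    have := add_le_add_right h (r : EReal)
    rwa [← add_assoc, ← EReal.coe_neg, ← EReal.coe_add, add_neg_cancel,
      EReal.coe_zero, zero_add] at this
  | top =>
    rw [EReal.top_add_of_ne_bot (by simp : ((μ:ℝ) : EReal) ≠ ⊥)]
    exact le_top

lemma ereal_add_coe_neg (a : EReal) (μ : ℝ) : a + (μ : EReal) + (-(μ : EReal)) = a := by
  rw [← sub_eq_add_neg]; exact EReal.add_sub_cancel_right

lemma ereal_neg_add_pos {a b : EReal} (h : a < b) : 0 < -a + b := by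
  induction a using EReal.rec with
  | bot =>
    rw [EReal.neg_bot, EReal.top_add_of_ne_bot (ne_bot_of_gt h)]
    exact (by simp : (0:EReal) < ⊤)
  | top => exact absurd h (by simp)
  | coe r =>
    induction b using EReal.rec with
    | bot => exact absurd h (by simp)
    | coe x =>
      rw [← EReal.coe_neg, ← EReal.coe_add]
      exact_mod_cast (by linarith [EReal.coe_lt_coe_iff.mp h] : (0:ℝ) < -r + x)
    | top =>
      rw [add_comm, EReal.top_add_of_ne_bot (by simp)]
      exact (by simp : (0:EReal) < ⊤)

lemma mem_diagE (hW : IsCompleteCongruenceE W) (f : EVec n) : (f, f) ∈ W := hW.1.2.1 f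

lemma ebarE_mem (hW : IsCompleteCongruenceE W) (g : EVec n) : (ebarE W g, g) ∈ W := by
  set Q : Set (EVec n × EVec n) := {p | p ∈ W ∧ p.2 = g} with hQdef
  have hQ : Q ⊆ W := fun p hp => hp.1
  have hmem := hW.1.1.2.2 Q hQ
  have h1 : (sSup Q).1 = ebarE W g := by
    rw [Prod.fst_sSup, ebarE]
    congr 1
    ext f
    constructor
    · rintro ⟨p, ⟨hp, hp2⟩, rfl⟩
      rw [← hp2]; exact hp
    · intro hf
      exact ⟨(f, g), ⟨hf, rfl⟩, rfl⟩
  have h2 : (sSup Q).2 = g := by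
    rw [Prod.snd_sSup]
    have : Prod.snd '' Q = {g} := by
      apply Set.eq_singleton_iff_unique_mem.mpr
      exact ⟨⟨(g, g), ⟨mem_diagE hW g, rfl⟩, rfl⟩, by rintro x ⟨p, ⟨_, hp2⟩, rfl⟩; exact hp2⟩
    rw [this, sSup_singleton]
  have : sSup Q = (ebarE W g, g) := Prod.ext h1 h2
  rwa [this] at hmem

lemma le_ebarE (hW : IsCompleteCongruenceE W) (g : EVec n) : g ≤ ebarE W g :=
  le_sSup (mem_diagE hW g)

lemma ebarE_eq_of_mem (hW : IsCompleteCongruenceE W) {f g : EVec n} (h : (f, g) ∈ W) :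
    ebarE W f = ebarE W g := by
  unfold ebarE
  congr 1
  ext u
  exact ⟨fun hu => hW.1.2.2 u f g hu h, fun hu => hW.1.2.2 u g f hu (hW.2 f g h)⟩

lemma mem_of_ebarE_eq (hW : IsCompleteCongruenceE W) {f g : EVec n}
    (h : ebarE W f = ebarE W g) : (f, g) ∈ W := by
  have h1 : (f, ebarE W f) ∈ W := hW.2 _ _ (ebarE_mem hW f)
  have h2 : (ebarE W g, g) ∈ W := ebarE_mem hW g
  rw [h] at h1
  exact hW.1.2.2 f (ebarE W g) g h1 h2

/-- If `f ≤ v + μ` pointwise with `μ` real and `v` a fixed point of `ē`,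
then `ē f ≤ v + μ` pointwise. -/
lemma ebarE_le_of_le_add (hW : IsCompleteCongruenceE W) {v f : EVec n}
    (hv : ebarE W v = v) (μ : ℝ) (hf : ∀ i, f i ≤ v i + (μ : EReal)) :
    ∀ i, ebarE W f i ≤ v i + (μ : EReal) := by
  have hp : (ebarE W f, f) ∈ W := ebarE_mem hW f
  have hq : ((fun i => v i + (μ : EReal)), (fun i => v i + (μ : EReal))) ∈ W :=
    mem_diagE hW _
  have hsup := hW.1.1.1 _ hp _ hq
  have hsnd : ((ebarE W f, f) ⊔ ((fun i => v i + (μ : EReal)), (fun i => v i + (μ : EReal)))).2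
      = fun i => v i + (μ : EReal) := by
    show f ⊔ _ = _
    exact sup_eq_right.mpr (fun i => hf i)
  have hsc := hW.1.1.2.1 _ hsup (-(μ : EReal))
  rw [hsnd] at hsc
  -- second component of hsc is v
  have hsnd2 : (fun i => (v i + (μ : EReal)) + (-(μ : EReal))) = v := by
    funext i; exact ereal_add_coe_neg (v i) μ
  rw [hsnd2] at hsc
  have hle : (fun i => ((ebarE W f, f) ⊔ ((fun i => v i + (μ : EReal)),
      (fun i => v i + (μ : EReal)))).1 i + (-(μ : EReal))) ≤ ebarE W v :=
    le_sSup hsc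
  intro i
  have h1 : ebarE W f i + (-(μ : EReal)) ≤ v i := by
    have := hle i
    rw [hv] at this
    refine le_trans (add_le_add_left ?_ _) this
    exact le_sup_left (α := EReal) (a := ebarE W f i)
  have := add_le_add_left h1 (μ : EReal)
  rwa [add_assoc, ← EReal.coe_neg, ← EReal.coe_add, neg_add_cancel,
    EReal.coe_zero, add_zero] at this

/-- The bracket with `y = -v` (`v` a fixed point of `ē`) is invariant under `ē`. -/
lemma bracket_ebarE (hW : IsCompleteCongruenceE W) {v : EVec n}
    (hv : ebarE W v = v) (f : EVec n) :
    (⨆ i, -(v i) + ebarE W f i) = ⨆ i, -(v i) + f i := by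
  apply le_antisymm
  · refine le_of_not_gt fun hlt => ?_
    obtain ⟨μ, h1, h2⟩ := EReal.exists_between_coe_real hlt
    have hb : ∀ i, f i ≤ v i + (μ : EReal) := fun i =>
      ereal_neg_add_le ((le_iSup (fun i => -(v i) + f i) i).trans h1.le)
    have hub : ∀ i, ebarE W f i ≤ v i + (μ : EReal) := ebarE_le_of_le_add hW hv μ hb
    have : (⨆ i, -(v i) + ebarE W f i) ≤ (μ : EReal) := by
      refine iSup_le fun i => ?_
      calc -(v i) + ebarE W f i ≤ -(v i) + (v i + (μ : EReal)) :=
            add_le_add_right (hub i) _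
        _ = (-(v i) + v i) + (μ : EReal) := (add_assoc _ _ _).symm
        _ ≤ 0 + (μ : EReal) := add_le_add_left (ereal_add_neg_le_zero (v i)) _
        _ = (μ : EReal) := zero_add _
    exact absurd (h2.trans_le this) (lt_irrefl _)
  · exact iSup_mono fun i => add_le_add_right (le_ebarE hW f i) _

lemma key_sep (hW : IsCompleteCongruenceE W) (s t : EVec n) (i0 : Fin n)
    (hlt : ebarE W t i0 < ebarE W s i0) :
    ∃ y : EVec n,
      (∀ p ∈ W, (⨆ i, y i + p.1 i) = ⨆ i, y i + p.2 i) ∧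
      (⨆ i, y i + s i) ≠ ⨆ i, y i + t i := by
  set v : EVec n := ebarE W t with hvdef
  have hv : ebarE W v = v := ebarE_eq_of_mem hW (ebarE_mem hW t)
  refine ⟨fun i => -(v i), ?_, ?_⟩
  · intro p hp
    have hpe : ebarE W p.1 = ebarE W p.2 := ebarE_eq_of_mem hW (by exact hp)
    calc (⨆ i, -(v i) + p.1 i) = ⨆ i, -(v i) + ebarE W p.1 i :=
          (bracket_ebarE hW hv p.1).symm
      _ = ⨆ i, -(v i) + ebarE W p.2 i := by rw [hpe]
      _ = ⨆ i, -(v i) + p.2 i := bracket_ebarE hW hv p.2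
  · -- ⟨y, t⟩ ≤ 0 < ⟨y, s⟩
    have ht0 : (⨆ i, -(v i) + t i) ≤ 0 := by
      rw [← bracket_ebarE hW hv t, ← hvdef]
      exact iSup_le fun i => ereal_add_neg_le_zero (v i)
    have hs0 : 0 < ⨆ i, -(v i) + s i := by
      rw [← bracket_ebarE hW hv s]
      refine lt_of_lt_of_le ?_ (le_iSup (fun i => -(v i) + ebarE W s i) i0)
      exact ereal_neg_add_pos hlt
    exact fun h => absurd (h ▸ hs0) (not_lt_of_ge ht0)

end SepAux

/-- Corollary 3.5 of the paper, specialized to the reflexive semiring `EReal`,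
`X = Y = EReal^n` and the bracket `⟨y,x⟩ = ⨆ i, (y_i + x_i)`: scalar-product
separation of a point from a complete congruence. -/
theorem scalar_separation_complete_congruence (n : ℕ)
    (W : Set (EVec n × EVec n)) (hW : IsCompleteCongruenceE W)
    (s t : EVec n) (hst : (s, t) ∉ W) :
    ∃ y : EVec n,
      (∀ p ∈ W, (⨆ i, y i + p.1 i) = ⨆ i, y i + p.2 i) ∧
      (⨆ i, y i + s i) ≠ ⨆ i, y i + t i := by
  have hne : ebarE W s ≠ ebarE W t := fun h => hst (mem_of_ebarE_eq hW h)
  obtain ⟨i0, hne0⟩ := Function.ne_iff.mp hne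
  rcases hne0.lt_or_gt with h | h
  · obtain ⟨y, h1, h2⟩ := key_sep hW t s i0 h
    exact ⟨y, h1, h2.symm⟩
  · exact key_sep hW s t i0 h
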